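/- With notation as in the Pieri rule for Gr(2, 2n+2): setting α_{1,G} = ∑_{i=n+1}^{2n} (-1)^i c_i σ_{i,2n-i} where c_{n+1} = 1 and c_i - c_{i-1} = i - n, and α_{2,G} = ∑_{i=n+1}^{2n} (-1)^i (i-n) σ_{i, 2n+1-i}, one has the identity σ_{1,0} · α_{1,G} = α_{2,G} in the cohomology ring. -/

import Mathlib

/-- A Schubert symbol `(a₁, a₂)` for `Gr(2, 2n+2)` is valid if `2n ≥ a₁ ≥ a₂ ≥ 0`;
the Pieri rule multiplies by `σ_{1,0}`, dropping invalid terms. -/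
noncomputable def pieri (n : ℕ) (ab : ℕ × ℕ) : (ℕ × ℕ) →₀ ℤ :=
  (if ab.2 ≤ ab.1 + 1 ∧ ab.1 + 1 ≤ 2 * n then Finsupp.single (ab.1 + 1, ab.2) 1 else 0) +
  (if ab.2 + 1 ≤ ab.1 ∧ ab.1 ≤ 2 * n then Finsupp.single (ab.1, ab.2 + 1) 1 else 0)

/-- Multiplication by `σ_{1,0}` on the free `ℤ`-module spanned by Schubert
classes, via the Pieri rule. -/
noncomputable def pieriMul (n : ℕ) (f : (ℕ × ℕ) →₀ ℤ) : (ℕ × ℕ) →₀ ℤ :=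
  f.sum fun ab c => c • pieri n ab

lemma pieriMul_add (n : ℕ) (f g : (ℕ × ℕ) →₀ ℤ) :
    pieriMul n (f + g) = pieriMul n f + pieriMul n g := by
  unfold pieriMul
  exact Finsupp.sum_add_index' (fun ab => zero_smul _ _) (fun ab b₁ b₂ => add_smul _ _ _)

lemma pieriMul_sum {ι : Type*} (n : ℕ) (s : Finset ι) (g : ι → (ℕ × ℕ) →₀ ℤ) :
    pieriMul n (∑ i ∈ s, g i) = ∑ i ∈ s, pieriMul n (g i) := by
  classical
  induction s using Finset.induction_on with
  | empty => simp [pieriMul]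
  | @insert a s h ih => rw [Finset.sum_insert h, Finset.sum_insert h, pieriMul_add, ih]

lemma pieriMul_single (n : ℕ) (ab : ℕ × ℕ) (c : ℤ) :
    pieriMul n (Finsupp.single ab c) = c • pieri n ab :=
  Finsupp.sum_single_index (zero_smul _ _)

lemma sum_shift {M : Type*} [AddCommMonoid M] (a b : ℕ) (hab : a ≤ b)
    (f g : ℕ → M) (hfb : f b = 0) (hga : g a = 0)
    (h : ∀ i, a ≤ i → i < b → f i = g (i + 1)) :
    ∑ i ∈ Finset.Icc a b, f i = ∑ i ∈ Finset.Icc a b, g i := by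
  rw [← Finset.Ico_add_one_right_eq_Icc, Finset.sum_Ico_succ_top (by omega), hfb, add_zero]
  conv_rhs => rw [Finset.sum_eq_sum_Ico_succ_bot (by omega), hga]
  rw [zero_add, show Finset.Ico (a + 1) (b + 1) = (Finset.Ico a b).map (addRightEmbedding 1) from
    (Finset.map_add_right_Ico a b 1).symm, Finset.sum_map]
  exact Finset.sum_congr rfl fun i hi => by
    simp only [Finset.mem_Ico] at hi
    simpa using h i hi.1 hi.2

/-- With `α_{1,G} = ∑_{i=n+1}^{2n} (-1)^i c_i σ_{i,2n-i}` (where `c_{n+1} = 1`,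
`c_i = c_{i-1} + (i - n)`) and `α_{2,G} = ∑_{i=n+1}^{2n} (-1)^i (i-n) σ_{i,2n+1-i}`,
the Pieri rule gives `σ_{1,0} · α_{1,G} = α_{2,G}`. -/
theorem stmt_12 (n : ℕ) (hn : 1 ≤ n) (c : ℕ → ℤ)
    (hbase : c (n + 1) = 1)
    (hrec : ∀ i : ℕ, n + 1 < i → c i = c (i - 1) + ((i : ℤ) - (n : ℤ))) :
    pieriMul n (∑ i ∈ Finset.Icc (n + 1) (2 * n),
        ((-1 : ℤ) ^ i * c i) • Finsupp.single (i, 2 * n - i) (1 : ℤ)) =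
      ∑ i ∈ Finset.Icc (n + 1) (2 * n),
        ((-1 : ℤ) ^ i * ((i : ℤ) - (n : ℤ))) • Finsupp.single (i, 2 * n + 1 - i) (1 : ℤ) := by
  have hn2 : n + 1 ≤ 2 * n := by omega
  rw [pieriMul_sum]
  have step1 : ∀ i ∈ Finset.Icc (n + 1) (2 * n),
      pieriMul n (((-1 : ℤ) ^ i * c i) • Finsupp.single (i, 2 * n - i) (1 : ℤ)) =
        (if i + 1 ≤ 2 * n then
            ((-1 : ℤ) ^ i * c i) • Finsupp.single (i + 1, 2 * n - i) (1 : ℤ) else 0)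
        + ((-1 : ℤ) ^ i * c i) • Finsupp.single (i, 2 * n + 1 - i) (1 : ℤ) := by
    intro i hi
    simp only [Finset.mem_Icc] at hi
    rw [Finsupp.smul_single, smul_eq_mul, mul_one, pieriMul_single]
    dsimp only [pieri]
    have e3 : 2 * n - i + 1 = 2 * n + 1 - i := by omega
    rw [if_pos (show 2 * n - i + 1 ≤ i ∧ i ≤ 2 * n from ⟨by omega, hi.2⟩), e3, smul_add]
    congr 1
    by_cases h : i + 1 ≤ 2 * n
    · rw [if_pos h, if_pos ⟨by omega, h⟩]
    · rw [if_neg h, if_neg fun hc => h hc.2, smul_zero]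
  rw [Finset.sum_congr rfl step1, Finset.sum_add_distrib]
  have step2 : (∑ i ∈ Finset.Icc (n + 1) (2 * n),
        if i + 1 ≤ 2 * n then
          ((-1 : ℤ) ^ i * c i) • Finsupp.single (i + 1, 2 * n - i) (1 : ℤ) else 0)
      = ∑ i ∈ Finset.Icc (n + 1) (2 * n),
        ((-1 : ℤ) ^ i * ((i : ℤ) - (n : ℤ)) - (-1 : ℤ) ^ i * c i) •
          Finsupp.single (i, 2 * n + 1 - i) (1 : ℤ) := by
    refine sum_shift (n + 1) (2 * n) hn2 _ _ ?_ ?_ ?_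
    · rw [if_neg (by omega)]
    · have h0 : (-1 : ℤ) ^ (n + 1) * ((↑(n + 1) : ℤ) - n) - (-1 : ℤ) ^ (n + 1) * c (n + 1)
          = 0 := by
        rw [hbase]; push_cast; ring
      rw [h0, zero_smul]
    · intro i h1 h2
      rw [if_pos (by omega)]
      have hc := hrec (i + 1) (by omega)
      simp only [Nat.add_sub_cancel] at hc
      have hco : 2 * n + 1 - (i + 1) = 2 * n - i := by omega
      rw [hco, hc]
      congr 1
      push_cast
      ring
  rw [step2, ← Finset.sum_add_distrib]
  exact Finset.sum_congr rfl fun i hi => by rw [← add_smul]; congr 1; ring
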